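/- For α ∈ 𝔰𝔲(2) and ℓ ∈ AN define α◁ℓ := P_su(ℓ⁻¹αℓ), where P_su is the projection of 𝔰𝔩(2,ℂ) onto 𝔰𝔲(2) along the direct sum decomposition 𝔰𝔩(2,ℂ) = 𝔰𝔲(2) ⊕ 𝔞𝔫, and set δ_α(ℓ) := αℓ − ℓ(α◁ℓ). Then for all α ∈ 𝔰𝔲(2) and ℓ₁, ℓ₂ ∈ AN: (i) α◁(ℓ₁ℓ₂) = (α◁ℓ₁)◁ℓ₂, and (ii) the twisted Leibniz rule δ_α(ℓ₁ℓ₂) = (δ_α ℓ₁)·ℓ₂ + ℓ₁·(δ_{α◁ℓ₁} ℓ₂) holds. -/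

import Mathlib

open Matrix

/-- `l` is an element of AN: a 2×2 complex matrix of the form
`[[λ, 0], [z, λ⁻¹]]` with `λ > 0` real and `z ∈ ℂ`. -/
def isAN (l : Matrix (Fin 2) (Fin 2) ℂ) : Prop :=
  ∃ (lam : ℝ) (z : ℂ), 0 < lam ∧ l = !![(lam : ℂ), 0; z, (lam : ℂ)⁻¹]

/-- `X ∈ 𝔰𝔲(2)`: a traceless skew-Hermitian 2×2 complex matrix. -/
def inSU2lie (X : Matrix (Fin 2) (Fin 2) ℂ) : Prop :=
  X.trace = 0 ∧ X.conjTranspose = -X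

/-- `X ∈ 𝔞𝔫`: a matrix of the form `[[a, 0], [z, -a]]` with `a ∈ ℝ`, `z ∈ ℂ`. -/
def inANlie (X : Matrix (Fin 2) (Fin 2) ℂ) : Prop :=
  ∃ (a : ℝ) (z : ℂ), X = !![(a : ℂ), 0; z, -(a : ℂ)]

/-- The right action `α ◁ ℓ := P_su(ℓ⁻¹ α ℓ)` of AN on 𝔰𝔲(2). -/
noncomputable def actBack (Psu : Matrix (Fin 2) (Fin 2) ℂ → Matrix (Fin 2) (Fin 2) ℂ)
    (α l : Matrix (Fin 2) (Fin 2) ℂ) : Matrix (Fin 2) (Fin 2) ℂ :=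
  Psu (l⁻¹ * α * l)

/-- The vector field `δ_α(ℓ) := α ℓ − ℓ (α ◁ ℓ)`. -/
noncomputable def deltaRot (Psu : Matrix (Fin 2) (Fin 2) ℂ → Matrix (Fin 2) (Fin 2) ℂ)
    (α l : Matrix (Fin 2) (Fin 2) ℂ) : Matrix (Fin 2) (Fin 2) ℂ :=
  α * l - l * actBack Psu α l

-- aux lemmas
lemma an_trace {X : Matrix (Fin 2) (Fin 2) ℂ} (h : inANlie X) : X.trace = 0 := by
  obtain ⟨a, z, rfl⟩ := h
  simp [Matrix.trace_fin_two]

lemma su_an_zero {X : Matrix (Fin 2) (Fin 2) ℂ} (h1 : inSU2lie X) (h2 : inANlie X) : X = 0 := by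
  obtain ⟨a, z, rfl⟩ := h2
  obtain ⟨ht, hc⟩ := h1
  have h01 := congrFun (congrFun hc 0) 1
  have h00 := congrFun (congrFun hc 0) 0
  simp [Matrix.conjTranspose_apply] at h01 h00
  have ha : (a : ℂ) = 0 := by linear_combination (1/2 : ℂ) * h00
  ext i j
  fin_cases i <;> fin_cases j <;> simp [h01, ha]

lemma an_sub {X Y : Matrix (Fin 2) (Fin 2) ℂ} (h1 : inANlie X) (h2 : inANlie Y) :
    inANlie (X - Y) := by
  obtain ⟨a, z, rfl⟩ := h1
  obtain ⟨b, w, rfl⟩ := h2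
  exact ⟨a - b, z - w, by push_cast; ext i j; fin_cases i <;> fin_cases j <;> simp <;> ring⟩

lemma su_sub {X Y : Matrix (Fin 2) (Fin 2) ℂ} (h1 : inSU2lie X) (h2 : inSU2lie Y) :
    inSU2lie (X - Y) := by
  obtain ⟨t1, c1⟩ := h1
  obtain ⟨t2, c2⟩ := h2
  constructor
  · simp [Matrix.trace_sub, t1, t2]
  · simp [Matrix.conjTranspose_sub, c1, c2]; abel

lemma proj_unique (Psu : Matrix (Fin 2) (Fin 2) ℂ → Matrix (Fin 2) (Fin 2) ℂ)
    (hPsu : ∀ X, X.trace = 0 → inSU2lie (Psu X) ∧ inANlie (X - Psu X))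
    {X Y : Matrix (Fin 2) (Fin 2) ℂ} (hX : X.trace = 0) (hY : Y.trace = 0)
    (hd : inANlie (X - Y)) : Psu X = Psu Y := by
  obtain ⟨sX, aX⟩ := hPsu X hX
  obtain ⟨sY, aY⟩ := hPsu Y hY
  have hsu : inSU2lie (Psu X - Psu Y) := su_sub sX sY
  have han : inANlie (Psu X - Psu Y) := by
    have : Psu X - Psu Y = (X - Y) - ((X - Psu X) - (Y - Psu Y)) := by abel
    rw [this]
    exact an_sub hd (an_sub aX aY)
  exact sub_eq_zero.mp (su_an_zero hsu han)

lemma an_inv {l : Matrix (Fin 2) (Fin 2) ℂ} (h : isAN l) :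
    (∃ (lam : ℝ) (z : ℂ), 0 < lam ∧ l = !![(lam : ℂ), 0; z, (lam : ℂ)⁻¹] ∧
      l⁻¹ = !![(lam : ℂ)⁻¹, 0; -z, (lam : ℂ)]) := by
  obtain ⟨lam, z, hl, rfl⟩ := h
  have hne : (lam : ℂ) ≠ 0 := by exact_mod_cast hl.ne'
  refine ⟨lam, z, hl, rfl, Matrix.inv_eq_left_inv ?_⟩
  ext i j
  fin_cases i <;> fin_cases j <;>
    (simp [Matrix.mul_apply, Fin.sum_univ_two, hne]; try ring)

lemma an_mul_inv {l : Matrix (Fin 2) (Fin 2) ℂ} (h : isAN l) :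
    l * l⁻¹ = 1 ∧ l⁻¹ * l = 1 := by
  obtain ⟨lam, z, hl, hle, hli⟩ := an_inv h
  have hne : (lam : ℂ) ≠ 0 := by exact_mod_cast hl.ne'
  rw [hli, hle]
  constructor <;> (ext i j; fin_cases i <;> fin_cases j <;>
    (simp [Matrix.mul_apply, Fin.sum_univ_two]; (try field_simp); try ring))

lemma an_conj {l N : Matrix (Fin 2) (Fin 2) ℂ} (hl : isAN l) (hN : inANlie N) :
    inANlie (l⁻¹ * N * l) := by
  obtain ⟨lam, z, hpos, hle, hli⟩ := an_inv hl
  obtain ⟨a, w, rfl⟩ := hN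
  have hne : (lam : ℂ) ≠ 0 := by exact_mod_cast hpos.ne'
  refine ⟨a, -z * a * lam + lam * w * lam + -(lam * a) * z, ?_⟩
  rw [hli, hle]
  ext i j
  fin_cases i <;> fin_cases j <;>
    (simp [Matrix.mul_apply, Fin.sum_univ_two]; (try field_simp); try ring)

lemma conj_trace {l X : Matrix (Fin 2) (Fin 2) ℂ} (hl : isAN l) (hX : X.trace = 0) :
    (l⁻¹ * X * l).trace = 0 := by
  rw [Matrix.trace_mul_comm, ← Matrix.mul_assoc, (an_mul_inv hl).1, Matrix.one_mul, hX]


/-- If `Psu` is the projection of 𝔰𝔩(2,ℂ) onto 𝔰𝔲(2) along 𝔰𝔩(2,ℂ) = 𝔰𝔲(2) ⊕ 𝔞𝔫,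
then `◁` is a right action: `α◁(ℓ₁ℓ₂) = (α◁ℓ₁)◁ℓ₂`, and the twisted Leibniz rule
`δ_α(ℓ₁ℓ₂) = (δ_α ℓ₁)ℓ₂ + ℓ₁(δ_{α◁ℓ₁} ℓ₂)` holds. -/
theorem twisted_leibniz
    (Psu : Matrix (Fin 2) (Fin 2) ℂ → Matrix (Fin 2) (Fin 2) ℂ)
    (hPsu : ∀ X, X.trace = 0 → inSU2lie (Psu X) ∧ inANlie (X - Psu X)) :
    ∀ α l₁ l₂, inSU2lie α → isAN l₁ → isAN l₂ →
      (actBack Psu α (l₁ * l₂) = actBack Psu (actBack Psu α l₁) l₂) ∧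
      (deltaRot Psu α (l₁ * l₂) =
        deltaRot Psu α l₁ * l₂ + l₁ * deltaRot Psu (actBack Psu α l₁) l₂) := by
  intro α l₁ l₂ hα h1 h2
  have htα : α.trace = 0 := hα.1
  have ht1 : (l₁⁻¹ * α * l₁).trace = 0 := conj_trace h1 htα
  set β := Psu (l₁⁻¹ * α * l₁) with hβ
  have htβ : β.trace = 0 := ((hPsu _ ht1).1).1
  have hNan : inANlie (l₁⁻¹ * α * l₁ - β) := (hPsu _ ht1).2
  have key : actBack Psu α (l₁ * l₂) = actBack Psu β l₂ := by
    unfold actBack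
    apply proj_unique Psu hPsu
    · rw [Matrix.mul_inv_rev]
      rw [show l₂⁻¹ * l₁⁻¹ * α * (l₁ * l₂) = l₂⁻¹ * (l₁⁻¹ * α * l₁) * l₂ by
        simp [Matrix.mul_assoc]]
      exact conj_trace h2 ht1
    · exact conj_trace h2 htβ
    · rw [Matrix.mul_inv_rev]
      rw [show l₂⁻¹ * l₁⁻¹ * α * (l₁ * l₂) - l₂⁻¹ * β * l₂
            = l₂⁻¹ * (l₁⁻¹ * α * l₁ - β) * l₂ by
        simp [Matrix.mul_sub, Matrix.sub_mul, Matrix.mul_assoc]]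
      exact an_conj h2 hNan
  refine ⟨key, ?_⟩
  unfold deltaRot
  rw [key]
  unfold actBack
  simp only [← hβ]
  noncomm_ring
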